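/- Evaluation of noncommutative rational functions is well-defined: let A be an Ore domain over a field F, let 𝒜 = A[x_1,…,x_M] (central polynomial variables), and let K, 𝒦 be their respective fields of fractions. If f ∈ 𝒦 has two representations f = g^{-1}h = g'^{-1}h' with g, h, g', h' ∈ 𝒜 and g(c) ≠ 0, g'(c) ≠ 0 for some c ∈ F^M, then g(c)^{-1}h(c) = g'(c)^{-1}h'(c) in K. -/

import Mathlib

/-- Evaluation of a noncommutative polynomial `p ∈ A[x_1,…,x_M]` (modelled as
`AddMonoidAlgebra A (Fin M →₀ ℕ)`) at a point `c ∈ F^M`. -/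
noncomputable def evalAt {F A : Type*} [Field F] [Ring A] [Algebra F A] {M : ℕ}
    (c : Fin M → F) (p : AddMonoidAlgebra A (Fin M →₀ ℕ)) : A :=
  Finsupp.sum p.coeff fun m r => (∏ μ : Fin M, c μ ^ m μ) • r

section AuxA
variable {A : Type*} [Ring A] {M : ℕ}

lemma commute_single_zero {r : A} (hr : ∀ a : A, Commute r a)
    (w : AddMonoidAlgebra A (Fin M →₀ ℕ)) : Commute (AddMonoidAlgebra.single 0 r) w := by
  show AddMonoidAlgebra.single 0 r * w = w * AddMonoidAlgebra.single 0 r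
  refine AddMonoidAlgebra.ext (Finsupp.ext fun x => ?_)
  rw [AddMonoidAlgebra.coeff_single_zero_mul, AddMonoidAlgebra.coeff_mul_single_zero]
  exact hr _

lemma commute_single_single (s m : Fin M →₀ ℕ) (a : A) :
    Commute (AddMonoidAlgebra.single s (1:A)) (AddMonoidAlgebra.single m a) := by
  show _ = _
  rw [AddMonoidAlgebra.single_mul_single, AddMonoidAlgebra.single_mul_single, add_comm,
    one_mul, mul_one]

lemma commute_single_one (s : Fin M →₀ ℕ) (w : AddMonoidAlgebra A (Fin M →₀ ℕ)) :
    Commute (AddMonoidAlgebra.single s (1:A)) w := by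
  induction w using AddMonoidAlgebra.induction with
  | zero => exact Commute.zero_right _
  | single_add m a f hmf ha ih => exact Commute.add_right (commute_single_single s m a) ih

/-- the variable `x_μ` as an element of the polynomial algebra -/
noncomputable def Xv (μ : Fin M) : AddMonoidAlgebra A (Fin M →₀ ℕ) :=
  AddMonoidAlgebra.single (Finsupp.single μ 1) 1

lemma commute_C_poly {z : AddMonoidAlgebra A (Fin M →₀ ℕ)} (hz : ∀ w, Commute z w)
    (q : Polynomial (AddMonoidAlgebra A (Fin M →₀ ℕ))) : Commute (Polynomial.C z) q := by
  induction q using Polynomial.induction_on' with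
  | add p q hp hq => exact hp.add_right hq
  | monomial n a =>
    rw [← Polynomial.C_mul_X_pow_eq_monomial]
    have h1 : Commute (Polynomial.C z) (Polynomial.C a) := by
      show _ = _
      rw [← Polynomial.C_mul, ← Polynomial.C_mul, hz a]
    exact h1.mul_right
      ((show Commute (Polynomial.C z) Polynomial.X from Polynomial.X_mul.symm).pow_right n)

noncomputable def ev1 : Polynomial (AddMonoidAlgebra A (Fin M →₀ ℕ)) →+*
    AddMonoidAlgebra A (Fin M →₀ ℕ) :=
  Polynomial.eval₂RingHom' (RingHom.id (AddMonoidAlgebra A (Fin M →₀ ℕ))) 1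
    (fun _ => Commute.one_right _)

noncomputable def ev0 : Polynomial (AddMonoidAlgebra A (Fin M →₀ ℕ)) →+*
    AddMonoidAlgebra A (Fin M →₀ ℕ) :=
  Polynomial.eval₂RingHom' (RingHom.id (AddMonoidAlgebra A (Fin M →₀ ℕ))) 0
    (fun _ => Commute.zero_right _)

lemma ev1_C (z : AddMonoidAlgebra A (Fin M →₀ ℕ)) : ev1 (Polynomial.C z) = z := by
  rw [ev1, Polynomial.eval₂RingHom'_apply, Polynomial.eval₂_C]
  rfl

lemma ev0_C (z : AddMonoidAlgebra A (Fin M →₀ ℕ)) : ev0 (Polynomial.C z) = z := by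
  rw [ev0, Polynomial.eval₂RingHom'_apply, Polynomial.eval₂_C]
  rfl

lemma ev1_X : ev1 (A := A) (M := M) Polynomial.X = 1 := by
  rw [ev1, Polynomial.eval₂RingHom'_apply, Polynomial.eval₂_X]

lemma ev0_X : ev0 (A := A) (M := M) Polynomial.X = 0 := by
  rw [ev0, Polynomial.eval₂RingHom'_apply, Polynomial.eval₂_X]

end AuxA

section Aux
variable {F A : Type*} [Field F] [Ring A] [Algebra F A] {M : ℕ}

/-- weight monoid hom -/
noncomputable def wHom (c : Fin M → F) : Multiplicative (Fin M →₀ ℕ) →* A where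
  toFun m := algebraMap F A (∏ μ : Fin M, c μ ^ (Multiplicative.toAdd m) μ)
  map_one' := by simp
  map_mul' a b := by
    simp [toAdd_mul, Finsupp.add_apply, pow_add, Finset.prod_mul_distrib, map_mul]

noncomputable def evalHom (c : Fin M → F) : AddMonoidAlgebra A (Fin M →₀ ℕ) →+* A :=
  AddMonoidAlgebra.liftNCRingHom (RingHom.id A) (wHom c)
    (fun x y => (Algebra.commutes _ _).symm)

lemma evalHom_single (c : Fin M → F) (m : Fin M →₀ ℕ) (a : A) :
    evalHom c (AddMonoidAlgebra.single m a) = (∏ μ : Fin M, c μ ^ m μ) • a := by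
  show AddMonoidAlgebra.liftNC _ _ _ = _
  rw [AddMonoidAlgebra.liftNC_single]
  show a * algebraMap F A _ = _
  rw [Algebra.smul_def, Algebra.commutes]
  rfl

lemma evalAt_single (c : Fin M → F) (m : Fin M →₀ ℕ) (a : A) :
    evalAt c (AddMonoidAlgebra.single m a) = (∏ μ : Fin M, c μ ^ m μ) • a :=
  Finsupp.sum_single_index (smul_zero _)

lemma evalAt_add (c : Fin M → F) (p q : AddMonoidAlgebra A (Fin M →₀ ℕ)) :
    evalAt c (p + q) = evalAt c p + evalAt c q :=
  Finsupp.sum_add_index' (f := p.coeff) (g := q.coeff) (fun _ => smul_zero _) (fun _ _ _ => smul_add _ _ _)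

lemma evalAt_eq (c : Fin M → F) (p : AddMonoidAlgebra A (Fin M →₀ ℕ)) :
    evalAt c p = evalHom c p := by
  induction p using AddMonoidAlgebra.induction with
  | zero => simp [evalAt]
  | single_add m a f hmf ha ih =>
    rw [evalAt_add, evalAt_single, map_add, ih, evalHom_single]






noncomputable def aconst (c : Fin M → F) (μ : Fin M) : AddMonoidAlgebra A (Fin M →₀ ℕ) :=
  AddMonoidAlgebra.single 0 (algebraMap F A (c μ))

noncomputable def psi (c : Fin M → F) (μ : Fin M) :
    Polynomial (AddMonoidAlgebra A (Fin M →₀ ℕ)) :=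
  Polynomial.C (aconst c μ) + Polynomial.C (Xv μ - aconst c μ) * Polynomial.X


lemma psi_commute (c : Fin M → F) (μ : Fin M)
    (q : Polynomial (AddMonoidAlgebra A (Fin M →₀ ℕ))) : Commute (psi c μ) q := by
  have hz1 : ∀ w, Commute (aconst c μ) w := fun w =>
    commute_single_zero (r := algebraMap F A (c μ)) (fun a => Algebra.commutes (c μ) a) w
  have hz2 : ∀ w, Commute (Xv μ - aconst c μ) w :=
    fun w => (commute_single_one _ w).sub_left (hz1 w)
  exact Commute.add_left (commute_C_poly hz1 q)
    (Commute.mul_left (commute_C_poly hz2 q) Polynomial.X_mul)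

lemma psi_mem_center (c : Fin M → F) (μ : Fin M) :
    psi c μ ∈ Submonoid.center (Polynomial (AddMonoidAlgebra A (Fin M →₀ ℕ))) :=
  Submonoid.mem_center_iff.mpr fun g => (psi_commute c μ g).symm

noncomputable def PsiZ (c : Fin M → F) (m : Fin M →₀ ℕ) :
    Submonoid.center (Polynomial (AddMonoidAlgebra A (Fin M →₀ ℕ))) :=
  ∏ μ : Fin M, (⟨psi c μ, psi_mem_center c μ⟩ :
    Submonoid.center (Polynomial (AddMonoidAlgebra A (Fin M →₀ ℕ)))) ^ m μ

noncomputable def PsiP (c : Fin M → F) (m : Fin M →₀ ℕ) :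
    Polynomial (AddMonoidAlgebra A (Fin M →₀ ℕ)) :=
  ↑(PsiZ (A := A) c m)

lemma PsiP_comm (c : Fin M → F) (m : Fin M →₀ ℕ)
    (q : Polynomial (AddMonoidAlgebra A (Fin M →₀ ℕ))) : q * PsiP c m = PsiP c m * q :=
  Submonoid.mem_center_iff.mp (PsiZ c m).2 q

lemma PsiP_zero (c : Fin M → F) : PsiP (A := A) c 0 = 1 := by
  have : PsiZ (A := A) c 0 = 1 := by simp [PsiZ]
  rw [PsiP, this, OneMemClass.coe_one]

lemma PsiP_add (c : Fin M → F) (a b : Fin M →₀ ℕ) :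
    PsiP (A := A) c (a + b) = PsiP c a * PsiP c b := by
  have : PsiZ (A := A) c (a + b) = PsiZ c a * PsiZ c b := by
    unfold PsiZ
    rw [← Finset.prod_mul_distrib]
    exact Finset.prod_congr rfl fun μ _ => by rw [Finsupp.add_apply, pow_add]
  rw [PsiP, this, Submonoid.coe_mul]
  rfl

lemma PsiP_single (c : Fin M → F) (μ : Fin M) (k : ℕ) :
    PsiP (A := A) c (Finsupp.single μ k) = psi c μ ^ k := by
  have : PsiZ (A := A) c (Finsupp.single μ k)
      = (⟨psi c μ, psi_mem_center c μ⟩ : Submonoid.center _) ^ k := by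
    unfold PsiZ
    rw [Finset.prod_eq_single μ
      (fun ν _ hν => by rw [Finsupp.single_eq_of_ne' (Ne.symm hν), pow_zero])
      (fun h => absurd (Finset.mem_univ μ) h), Finsupp.single_eq_same]
  rw [PsiP, this, SubmonoidClass.coe_pow]

noncomputable def PsiM (c : Fin M → F) :
    Multiplicative (Fin M →₀ ℕ) →* Polynomial (AddMonoidAlgebra A (Fin M →₀ ℕ)) where
  toFun m := PsiP c (Multiplicative.toAdd m)
  map_one' := PsiP_zero c
  map_mul' a b := PsiP_add c (Multiplicative.toAdd a) (Multiplicative.toAdd b)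

noncomputable def Psi (c : Fin M → F) :
    AddMonoidAlgebra A (Fin M →₀ ℕ) →+* Polynomial (AddMonoidAlgebra A (Fin M →₀ ℕ)) :=
  AddMonoidAlgebra.liftNCRingHom
    (Polynomial.C.comp AddMonoidAlgebra.singleZeroRingHom) (PsiM c)
    (fun x y => PsiP_comm c (Multiplicative.toAdd y) _)

lemma Psi_single (c : Fin M → F) (m : Fin M →₀ ℕ) (a : A) :
    Psi c (AddMonoidAlgebra.single m a)
      = Polynomial.C (AddMonoidAlgebra.single 0 a) * PsiP c m := by
  show AddMonoidAlgebra.liftNC _ _ _ = _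
  rw [AddMonoidAlgebra.liftNC_single]
  rfl

lemma ev1_psi (c : Fin M → F) (μ : Fin M) : ev1 (psi (A := A) c μ) = Xv μ := by
  rw [psi, map_add, map_mul, ev1_C, ev1_C, ev1_X, mul_one]
  abel

lemma ev0_psi (c : Fin M → F) (μ : Fin M) : ev0 (psi (A := A) c μ) = aconst c μ := by
  rw [psi, map_add, map_mul, ev0_C, ev0_C, ev0_X, mul_zero, add_zero]

lemma wF_add (c : Fin M → F) (a b : Fin M →₀ ℕ) :
    (∏ μ : Fin M, c μ ^ (a + b) μ) = (∏ μ : Fin M, c μ ^ a μ) * ∏ μ : Fin M, c μ ^ b μ := by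
  simp [Finsupp.add_apply, pow_add, Finset.prod_mul_distrib]

lemma wF_single (c : Fin M → F) (μ : Fin M) (k : ℕ) :
    (∏ ν : Fin M, c ν ^ (Finsupp.single μ k) ν) = c μ ^ k := by
  rw [Finset.prod_eq_single μ
    (fun ν _ hν => by rw [Finsupp.single_eq_of_ne' (Ne.symm hν), pow_zero])
    (fun h => absurd (Finset.mem_univ μ) h), Finsupp.single_eq_same]

lemma ev1_PsiP (c : Fin M → F) (m : Fin M →₀ ℕ) :
    ev1 (PsiP (A := A) c m) = AddMonoidAlgebra.single m (1:A) := by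
  induction m using Finsupp.induction with
  | zero =>
    rw [PsiP_zero, map_one]
    exact AddMonoidAlgebra.one_def
  | single_add μ k f hμf hk ih =>
    have hs : ev1 (PsiP (A := A) c (Finsupp.single μ k))
        = AddMonoidAlgebra.single (Finsupp.single μ k) (1:A) := by
      rw [PsiP_single, map_pow, ev1_psi, Xv, AddMonoidAlgebra.single_pow, one_pow,
        Finsupp.smul_single, smul_eq_mul, mul_one]
    rw [PsiP_add, map_mul, hs, ih, AddMonoidAlgebra.single_mul_single, one_mul]

lemma ev0_PsiP (c : Fin M → F) (m : Fin M →₀ ℕ) :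
    ev0 (PsiP (A := A) c m)
      = AddMonoidAlgebra.single 0 (algebraMap F A (∏ μ : Fin M, c μ ^ m μ)) := by
  induction m using Finsupp.induction with
  | zero =>
    rw [PsiP_zero, map_one]
    simp [AddMonoidAlgebra.one_def]
  | single_add μ k f hμf hk ih =>
    have hs : ev0 (PsiP (A := A) c (Finsupp.single μ k))
        = AddMonoidAlgebra.single 0 (algebraMap F A (c μ ^ k)) := by
      rw [PsiP_single, map_pow, ev0_psi, aconst, AddMonoidAlgebra.single_pow, smul_zero,
        ← map_pow]
    rw [PsiP_add, map_mul, hs, ih, AddMonoidAlgebra.single_mul_single,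
      add_zero, ← map_mul, wF_add, wF_single]

lemma ev1_Psi (c : Fin M → F) (p : AddMonoidAlgebra A (Fin M →₀ ℕ)) :
    ev1 (Psi c p) = p := by
  have key : (ev1.comp (Psi c)) = RingHom.id (AddMonoidAlgebra A (Fin M →₀ ℕ)) := by
    refine AddMonoidAlgebra.ringHom_ext (fun b => ?_) (fun m => ?_)
    · show ev1 (Psi c (AddMonoidAlgebra.single 0 b)) = _
      rw [Psi_single, PsiP_zero, mul_one, ev1_C]
      rfl
    · show ev1 (Psi c (AddMonoidAlgebra.single m 1)) = _
      rw [Psi_single, ← AddMonoidAlgebra.one_def, map_one, one_mul, ev1_PsiP]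
      rfl
  exact RingHom.congr_fun key p

lemma Psi_injective (c : Fin M → F) :
    Function.Injective (Psi (A := A) (M := M) c) := fun p q hpq => by
  rw [← ev1_Psi c p, hpq, ev1_Psi]

lemma ev0_Psi (c : Fin M → F) (p : AddMonoidAlgebra A (Fin M →₀ ℕ)) :
    ev0 (Psi c p) = AddMonoidAlgebra.single 0 (evalHom c p) := by
  have key : (ev0.comp (Psi c))
      = (AddMonoidAlgebra.singleZeroRingHom (R := A) (M := Fin M →₀ ℕ)).comp (evalHom c) := by
    refine AddMonoidAlgebra.ringHom_ext (fun b => ?_) (fun m => ?_)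
    · show ev0 (Psi c (AddMonoidAlgebra.single 0 b))
        = AddMonoidAlgebra.single 0 (evalHom c (AddMonoidAlgebra.single 0 b))
      rw [Psi_single, PsiP_zero, mul_one, ev0_C, evalHom_single]
      simp
    · show ev0 (Psi c (AddMonoidAlgebra.single m 1))
        = AddMonoidAlgebra.single 0 (evalHom c (AddMonoidAlgebra.single m 1))
      rw [Psi_single, ← AddMonoidAlgebra.one_def, map_one, one_mul, ev0_PsiP,
        evalHom_single, ← Algebra.algebraMap_eq_smul_one]
  exact RingHom.congr_fun key p

lemma coeff_zero_Psi (c : Fin M → F) (p : AddMonoidAlgebra A (Fin M →₀ ℕ)) :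
    (Psi c p).coeff 0 = AddMonoidAlgebra.single 0 (evalHom c p) := by
  rw [Polynomial.coeff_zero_eq_eval_zero]
  exact ev0_Psi c p

end Aux


/-- Evaluation of noncommutative rational functions is well-defined: let `A` be an Ore
domain over `F`, `𝒜 = A[x_1,…,x_M]` (also an Ore domain), `𝒦 ⊇ 𝒜` and `K ⊇ A` the
respective skew fields of fractions. If `g⁻¹h = g'⁻¹h'` in `𝒦` and `g(c) ≠ 0`,
`g'(c) ≠ 0`, then `g(c)⁻¹h(c) = g'(c)⁻¹h'(c)` in `K`. -/
theorem eval_of_fraction_well_defined {F A 𝒦 K : Type*} [Field F] [Ring A] [Algebra F A]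
    [NoZeroDivisors A] [Nontrivial A] [DivisionRing 𝒦] [DivisionRing K] {M : ℕ}
    (hOreA : ∀ a b : A, a ≠ 0 → b ≠ 0 →
      (∃ x y : A, x * a = y * b ∧ x * a ≠ 0) ∧ (∃ x y : A, a * x = b * y ∧ a * x ≠ 0))
    (hOreP : ∀ a b : AddMonoidAlgebra A (Fin M →₀ ℕ), a ≠ 0 → b ≠ 0 →
      (∃ x y : AddMonoidAlgebra A (Fin M →₀ ℕ), x * a = y * b ∧ x * a ≠ 0) ∧
      (∃ x y : AddMonoidAlgebra A (Fin M →₀ ℕ), a * x = b * y ∧ a * x ≠ 0))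
    (ι : AddMonoidAlgebra A (Fin M →₀ ℕ) →+* 𝒦) (hι : Function.Injective ι)
    (κ : A →+* K) (hκ : Function.Injective κ)
    (g h g' h' : AddMonoidAlgebra A (Fin M →₀ ℕ)) (c : Fin M → F)
    (hfrac : (ι g)⁻¹ * ι h = (ι g')⁻¹ * ι h')
    (hg : evalAt c g ≠ 0) (hg' : evalAt c g' ≠ 0) :
    (κ (evalAt c g))⁻¹ * κ (evalAt c h) = (κ (evalAt c g'))⁻¹ * κ (evalAt c h') := by
  classical
  simp only [evalAt_eq] at hg hg' ⊢
  have hg0 : g ≠ 0 := fun e => hg (by rw [e, map_zero])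
  have hg'0 : g' ≠ 0 := fun e => hg' (by rw [e, map_zero])
  -- Ore condition: common left multiple of g and g'
  obtain ⟨⟨u, u', hug, hune⟩, -⟩ := hOreP g g' hg0 hg'0
  have hu : u ≠ 0 := fun e => hune (by rw [e, zero_mul])
  have hu' : u' ≠ 0 := by
    intro e
    rw [hug, e, zero_mul] at hune
    exact hune rfl
  have hιg : ι g ≠ 0 := fun e => hg0 (hι (by rw [e, map_zero]))
  have hιg' : ι g' ≠ 0 := fun e => hg'0 (hι (by rw [e, map_zero]))
  -- u h = u' h' from the fraction identity
  have huh : u * h = u' * h' := by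
    apply hι
    have h1 : ι g * ((ι g)⁻¹ * ι h) = ι h := by
      rw [← mul_assoc, mul_inv_cancel₀ hιg, one_mul]
    have h2 : ι g' * ((ι g')⁻¹ * ι h') = ι h' := by
      rw [← mul_assoc, mul_inv_cancel₀ hιg', one_mul]
    rw [map_mul, map_mul, ← h1, ← h2, hfrac]
    conv_lhs => rw [← mul_assoc]
    conv_rhs => rw [← mul_assoc]
    rw [← map_mul, ← map_mul, hug]
  -- trivial case h = 0
  by_cases hh0 : h = 0
  · have hh'0 : h' = 0 := by
      have hz : u' * h' = 0 := by rw [← huh, hh0, mul_zero]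
      rcases mul_eq_zero.mp hz with e | e
      · exact absurd e hu'
      · exact e
    simp [hh0, hh'0]
  have hh'0 : h' ≠ 0 := by
    intro e
    apply hh0
    have hz : u * h = 0 := by rw [huh, e, mul_zero]
    rcases mul_eq_zero.mp hz with e' | e'
    · exact absurd e' hu
    · exact e'
  -- move to Polynomial (AddMonoidAlgebra ...) via Psi
  have hPU : Psi c u ≠ 0 := fun e => hu (Psi_injective c (by rw [e, map_zero]))
  have hPU' : Psi c u' ≠ 0 := fun e => hu' (Psi_injective c (by rw [e, map_zero]))
  have hPG : Psi c g ≠ 0 := fun e => hg0 (Psi_injective c (by rw [e, map_zero]))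
  have hPG' : Psi c g' ≠ 0 := fun e => hg'0 (Psi_injective c (by rw [e, map_zero]))
  have hPH : Psi c h ≠ 0 := fun e => hh0 (Psi_injective c (by rw [e, map_zero]))
  have hPH' : Psi c h' ≠ 0 := fun e => hh'0 (Psi_injective c (by rw [e, map_zero]))
  have hUG : Psi c u * Psi c g = Psi c u' * Psi c g' := by
    rw [← map_mul, ← map_mul, hug]
  have hUH : Psi c u * Psi c h = Psi c u' * Psi c h' := by
    rw [← map_mul, ← map_mul, huh]
  have cG0 : (Psi c g).coeff 0 ≠ 0 := by
    rw [coeff_zero_Psi]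
    exact fun e => hg (AddMonoidAlgebra.single_eq_zero.mp e)
  have cG'0 : (Psi c g').coeff 0 ≠ 0 := by
    rw [coeff_zero_Psi]
    exact fun e => hg' (AddMonoidAlgebra.single_eq_zero.mp e)
  have ntdG : (Psi c g).natTrailingDegree = 0 := by
    by_contra hn
    exact cG0 (Polynomial.coeff_eq_zero_of_lt_natTrailingDegree (Nat.pos_of_ne_zero hn))
  have ntdG' : (Psi c g').natTrailingDegree = 0 := by
    by_contra hn
    exact cG'0 (Polynomial.coeff_eq_zero_of_lt_natTrailingDegree (Nat.pos_of_ne_zero hn))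
  have tG : (Psi c g).trailingCoeff = AddMonoidAlgebra.single 0 (evalHom c g) := by
    rw [Polynomial.trailingCoeff, ntdG, coeff_zero_Psi]
  have tG' : (Psi c g').trailingCoeff = AddMonoidAlgebra.single 0 (evalHom c g') := by
    rw [Polynomial.trailingCoeff, ntdG', coeff_zero_Psi]
  have e1 : (Psi c u).natTrailingDegree + (Psi c g).natTrailingDegree
      = (Psi c u').natTrailingDegree + (Psi c g').natTrailingDegree := by
    rw [← Polynomial.natTrailingDegree_mul hPU hPG, hUG,
      Polynomial.natTrailingDegree_mul hPU' hPG']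
  have e2 : (Psi c u).natTrailingDegree + (Psi c h).natTrailingDegree
      = (Psi c u').natTrailingDegree + (Psi c h').natTrailingDegree := by
    rw [← Polynomial.natTrailingDegree_mul hPU hPH, hUH,
      Polynomial.natTrailingDegree_mul hPU' hPH']
  rw [ntdG, ntdG'] at e1
  have hdH : (Psi c h).natTrailingDegree = (Psi c h').natTrailingDegree := by omega
  by_cases hH0 : (Psi c h).natTrailingDegree = 0
  · -- main case: compare trailing coefficients
    have tH : (Psi c h).trailingCoeff = AddMonoidAlgebra.single 0 (evalHom c h) := by
      rw [Polynomial.trailingCoeff, hH0, coeff_zero_Psi]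
    have tH' : (Psi c h').trailingCoeff = AddMonoidAlgebra.single 0 (evalHom c h') := by
      rw [Polynomial.trailingCoeff, ← hdH, hH0, coeff_zero_Psi]
    have tr1 : (Psi c u).trailingCoeff * AddMonoidAlgebra.single 0 (evalHom c g)
        = (Psi c u').trailingCoeff * AddMonoidAlgebra.single 0 (evalHom c g') := by
      have t1 := Polynomial.trailingCoeff_mul (Psi c u) (Psi c g)
      rw [hUG, Polynomial.trailingCoeff_mul, tG, tG'] at t1
      exact t1.symm
    have tr2 : (Psi c u).trailingCoeff * AddMonoidAlgebra.single 0 (evalHom c h)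
        = (Psi c u').trailingCoeff * AddMonoidAlgebra.single 0 (evalHom c h') := by
      have t1 := Polynomial.trailingCoeff_mul (Psi c u) (Psi c h)
      rw [hUH, Polynomial.trailingCoeff_mul, tH, tH'] at t1
      exact t1.symm
    have htU : (Psi c u).trailingCoeff ≠ 0 :=
      fun e => hPU (Polynomial.trailingCoeff_eq_zero.mp e)
    obtain ⟨m, hm⟩ := (Finsupp.support_nonempty_iff (f := (Psi c u).trailingCoeff.coeff)).mpr (fun e => htU (AddMonoidAlgebra.ext (by rw [e]; rfl)))
    have hr : (Psi c u).trailingCoeff.coeff m ≠ 0 := Finsupp.mem_support_iff.mp hm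
    have key1 : (Psi c u).trailingCoeff.coeff m * evalHom c g
        = (Psi c u').trailingCoeff.coeff m * evalHom c g' := by
      have : (((Psi c u).trailingCoeff * AddMonoidAlgebra.single 0 (evalHom c g) :
            AddMonoidAlgebra A (Fin M →₀ ℕ))).coeff m
          = (((Psi c u').trailingCoeff * AddMonoidAlgebra.single 0 (evalHom c g') :
            AddMonoidAlgebra A (Fin M →₀ ℕ))).coeff m := by
        rw [tr1]
      rwa [AddMonoidAlgebra.coeff_mul_single_zero,
        AddMonoidAlgebra.coeff_mul_single_zero] at this
    have key2 : (Psi c u).trailingCoeff.coeff m * evalHom c h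
        = (Psi c u').trailingCoeff.coeff m * evalHom c h' := by
      have : (((Psi c u).trailingCoeff * AddMonoidAlgebra.single 0 (evalHom c h) :
            AddMonoidAlgebra A (Fin M →₀ ℕ))).coeff m
          = (((Psi c u').trailingCoeff * AddMonoidAlgebra.single 0 (evalHom c h') :
            AddMonoidAlgebra A (Fin M →₀ ℕ))).coeff m := by
        rw [tr2]
      rwa [AddMonoidAlgebra.coeff_mul_single_zero,
        AddMonoidAlgebra.coeff_mul_single_zero] at this
    -- transfer to K
    have hr0 : κ ((Psi c u).trailingCoeff.coeff m) ≠ 0 :=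
      fun e => hr (hκ (by rw [e, map_zero]))
    have f1 : κ ((Psi c u).trailingCoeff.coeff m) * κ (evalHom c g)
        = κ ((Psi c u').trailingCoeff.coeff m) * κ (evalHom c g') := by
      rw [← map_mul, ← map_mul, key1]
    have f2 : κ ((Psi c u).trailingCoeff.coeff m) * κ (evalHom c h)
        = κ ((Psi c u').trailingCoeff.coeff m) * κ (evalHom c h') := by
      rw [← map_mul, ← map_mul, key2]
    have hκg : κ (evalHom c g) ≠ 0 := fun e => hg (hκ (by rw [e, map_zero]))
    have hs0 : κ ((Psi c u').trailingCoeff.coeff m) ≠ 0 := by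
      intro e
      apply mul_ne_zero hr0 hκg
      rw [f1, e, zero_mul]
    have key : ∀ t x y : K, t ≠ 0 → (t * x)⁻¹ * (t * y) = x⁻¹ * y := by
      intro t x y ht
      rw [mul_inv_rev, mul_assoc, ← mul_assoc t⁻¹ t y, inv_mul_cancel₀ ht, one_mul]
    calc (κ (evalHom c g))⁻¹ * κ (evalHom c h)
        = (κ ((Psi c u).trailingCoeff.coeff m) * κ (evalHom c g))⁻¹
          * (κ ((Psi c u).trailingCoeff.coeff m) * κ (evalHom c h)) := (key _ _ _ hr0).symm
      _ = (κ ((Psi c u').trailingCoeff.coeff m) * κ (evalHom c g'))⁻¹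
          * (κ ((Psi c u').trailingCoeff.coeff m) * κ (evalHom c h')) := by rw [f1, f2]
      _ = (κ (evalHom c g'))⁻¹ * κ (evalHom c h') := key _ _ _ hs0
  · -- degenerate case: both evaluations of h, h' vanish
    have ch : evalHom c h = 0 := by
      have : (Psi c h).coeff 0 = 0 :=
        Polynomial.coeff_eq_zero_of_lt_natTrailingDegree (Nat.pos_of_ne_zero hH0)
      rw [coeff_zero_Psi] at this
      exact AddMonoidAlgebra.single_eq_zero.mp this
    have ch' : evalHom c h' = 0 := by
      have : (Psi c h').coeff 0 = 0 := by
        refine Polynomial.coeff_eq_zero_of_lt_natTrailingDegree ?_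
        rw [← hdH]
        exact Nat.pos_of_ne_zero hH0
      rw [coeff_zero_Psi] at this
      exact AddMonoidAlgebra.single_eq_zero.mp this
    rw [ch, ch', map_zero, mul_zero, mul_zero]
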